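/- Greedy approximation bound for monotone submodular maximization: if f is a monotone submodular set function on finite subsets of a ground set with f(∅) = 0, S* is any set of size k, and x_1,…,x_n is a greedy sequence (each x_{l+1} maximizes the marginal gain f(S_l ∪ {x}) − f(S_l) over the ground set, where S_l = {x_1,…,x_l}), then f(S_n) ≥ (1 − e^{-n/k}) f(S*). -/

import Mathlib

lemma submod_sum_aux {V : Type*} [DecidableEq V] (f : Finset V → ℝ)
    (hsub : ∀ A B : Finset V, A ⊆ B → ∀ v ∉ B,
      f (insert v A) - f A ≥ f (insert v B) - f B) :
    ∀ (T A : Finset V), f (A ∪ T) - f A ≤ ∑ y ∈ T, (f (insert y A) - f A) := by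
  intro T
  induction T using Finset.induction with
  | empty => simp
  | @insert v T' hv ih =>
    intro A
    rw [Finset.sum_insert hv, Finset.union_insert]
    have h1 := ih A
    by_cases hvA : v ∈ A ∪ T'
    · have he : insert v (A ∪ T') = A ∪ T' := Finset.insert_eq_self.mpr hvA
      have hvA' : v ∈ A := by
        rcases Finset.mem_union.mp hvA with h | h
        · exact h
        · exact absurd h hv
      have he2 : insert v A = A := Finset.insert_eq_self.mpr hvA'
      rw [he, he2]; linarith
    · have h2 := hsub A (A ∪ T') Finset.subset_union_left v hvA
      linarith

/-- Greedy approximation bound for monotone submodular maximization: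
`f(S_n) ≥ (1 - e^{-n/k}) f(S*)`. -/
theorem greedy_submodular_bound {V : Type*} [Fintype V] [DecidableEq V]
    (f : Finset V → ℝ)
    (hmono : ∀ A B : Finset V, A ⊆ B → f A ≤ f B)
    (hsub : ∀ A B : Finset V, A ⊆ B → ∀ v ∉ B,
      f (insert v A) - f A ≥ f (insert v B) - f B)
    (hempty : f ∅ = 0)
    (n k : ℕ) (hk : 0 < k)
    (Sstar : Finset V) (hcard : Sstar.card = k)
    (x : ℕ → V) (S : ℕ → Finset V)
    (hS : ∀ l, S l = (Finset.range l).image x)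
    (hgreedy : ∀ l < n, ∀ y : V,
      f (S (l + 1)) - f (S l) ≥ f (insert y (S l)) - f (S l)) :
    f (S n) ≥ (1 - Real.exp (-(n : ℝ) / (k : ℝ))) * f Sstar := by
  set kr : ℝ := (k : ℝ) with hkr
  have hkr0 : (0 : ℝ) < kr := by rw [hkr]; exact_mod_cast hk
  have hkr1 : (1 : ℝ) ≤ kr := by rw [hkr]; exact_mod_cast hk
  set c : ℝ := 1 - 1 / kr with hc
  have hc0 : 0 ≤ c := by
    have : 1 / kr ≤ 1 := by
      rw [div_le_one hkr0]; exact hkr1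
    rw [hc]; linarith
  have hfstar0 : 0 ≤ f Sstar := by
    have := hmono ∅ Sstar (Finset.empty_subset _)
    linarith [hempty ▸ this]
  -- main induction
  have main : ∀ l, l ≤ n → f Sstar - f (S l) ≤ c ^ l * f Sstar := by
    intro l
    induction l with
    | zero =>
      intro _
      have : S 0 = ∅ := by simp [hS 0]
      simp [this, hempty]
    | succ l ih =>
      intro h
      have hl : l < n := h
      have ih' := ih (le_of_lt hl)
      -- step inequality
      have hsum := submod_sum_aux f hsub Sstar (S l)
      have hbound : ∑ y ∈ Sstar, (f (insert y (S l)) - f (S l))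
          ≤ (k : ℝ) * (f (S (l + 1)) - f (S l)) := by
        calc ∑ y ∈ Sstar, (f (insert y (S l)) - f (S l))
            ≤ ∑ _y ∈ Sstar, (f (S (l + 1)) - f (S l)) :=
              Finset.sum_le_sum (fun y _ => hgreedy l hl y)
          _ = (k : ℝ) * (f (S (l + 1)) - f (S l)) := by
              rw [Finset.sum_const, hcard]; simp [nsmul_eq_mul]
      have hmono' : f Sstar ≤ f (S l ∪ Sstar) :=
        hmono _ _ Finset.subset_union_right
      have hkey : f Sstar - f (S l) ≤ kr * (f (S (l + 1)) - f (S l)) := by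
        calc f Sstar - f (S l) ≤ f (S l ∪ Sstar) - f (S l) := by linarith
          _ ≤ _ := le_trans hsum hbound
      have hstep : f Sstar - f (S (l + 1)) ≤ c * (f Sstar - f (S l)) := by
        have h2 : kr * (f Sstar - f (S (l + 1)))
            ≤ kr * (c * (f Sstar - f (S l))) := by
          have : kr * (c * (f Sstar - f (S l)))
              = kr * (f Sstar - f (S l)) - (f Sstar - f (S l)) := by
            rw [hc, one_div, sub_mul, one_mul, mul_sub, ← mul_assoc, mul_inv_cancel₀ hkr0.ne', one_mul]
          rw [this]; linarith
        exact le_of_mul_le_mul_left h2 hkr0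
      calc f Sstar - f (S (l + 1)) ≤ c * (f Sstar - f (S l)) := hstep
        _ ≤ c * (c ^ l * f Sstar) := mul_le_mul_of_nonneg_left ih' hc0
        _ = c ^ (l + 1) * f Sstar := by ring
  have hmain := main n le_rfl
  -- c^n ≤ exp(-n/k)
  have hce : c ≤ Real.exp (-(1 / kr)) := by
    have := Real.add_one_le_exp (-(1 / kr))
    linarith
  have hpow : c ^ n ≤ Real.exp (-(n : ℝ) / kr) := by
    calc c ^ n ≤ (Real.exp (-(1 / kr))) ^ n := pow_le_pow_left₀ hc0 hce n
      _ = Real.exp ((n : ℝ) * (-(1 / kr))) := by rw [← Real.exp_nat_mul]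
      _ = Real.exp (-(n : ℝ) / kr) := by ring_nf
  have hmul : c ^ n * f Sstar ≤ Real.exp (-(n : ℝ) / kr) * f Sstar :=
    mul_le_mul_of_nonneg_right hpow hfstar0
  nlinarith [hmain, hmul]
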